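/- Let L be a complex Banach Lie algebra such that the intersection of all maximal proper closed Lie subalgebras of finite codimension in L equals {0}. If L is solvable, then the second term of the derived series of L vanishes: ⁅⁅L,L⁆,⁅L,L⁆⁆ = {0}. -/

import Mathlib

set_option linter.unusedSectionVars false
set_option linter.unusedVariables false

open Module LinearMap

namespace Stmt13Aux

variable {V : Type*} [AddCommGroup V] [Module ℂ V] [FiniteDimensional ℂ V]

/-- The flag of subspaces spanned by `w, x w, …, x^(n-1) w`. -/
noncomputable def Un (x : Module.End ℂ V) (w : V) (n : ℕ) : Submodule ℂ V :=
  Submodule.span ℂ ((fun i => (x ^ i) w) '' Set.Iio n)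

lemma Un_mono (x : Module.End ℂ V) (w : V) : Monotone (Un x w) := fun a b hab =>
  Submodule.span_mono (Set.image_mono fun _ hi => lt_of_lt_of_le hi hab)

lemma pow_w_mem (x : Module.End ℂ V) (w : V) {i n : ℕ} (h : i < n) :
    (x ^ i) w ∈ Un x w n :=
  Submodule.subset_span ⟨i, h, rfl⟩

lemma Un_zero (x : Module.End ℂ V) (w : V) : Un x w 0 = ⊥ := by
  rw [Un]
  have h0 : Set.Iio (0 : ℕ) = ∅ := by ext i; simp
  rw [h0]
  simp

lemma x_maps (x : Module.End ℂ V) (w : V) (n : ℕ) {v : V} (hv : v ∈ Un x w n) :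
    x v ∈ Un x w (n + 1) := by
  have hle : Submodule.map x (Un x w n) ≤ Un x w (n + 1) := by
    rw [Un, Submodule.map_span, Submodule.span_le]
    rintro _ ⟨_, ⟨i, hi, rfl⟩, rfl⟩
    have : x ((x ^ i) w) = (x ^ (i + 1)) w := by
      rw [pow_succ']; rfl
    rw [this]
    exact pow_w_mem x w (Nat.succ_lt_succ hi)
  exact hle ⟨v, hv, rfl⟩

lemma claim1 (x : Module.End ℂ V) (h : Set (Module.End ℂ V))
    (hcl : ∀ y ∈ h, ⁅y, x⁆ ∈ h) (χ : Module.End ℂ V → ℂ) (w : V)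
    (heig : ∀ y ∈ h, y w = χ y • w) :
    ∀ n, ∀ y ∈ h, y ((x ^ n) w) - χ y • ((x ^ n) w) ∈ Un x w n := by
  intro n
  induction n with
  | zero =>
    intro y hy
    simp only [pow_zero, Module.End.one_apply, heig y hy, sub_self]
    exact zero_mem _
  | succ n ih =>
    intro y hy
    have hp : (x ^ (n + 1)) w = x ((x ^ n) w) := by rw [pow_succ']; rfl
    have hb : ⁅y, x⁆ ((x ^ n) w) = y (x ((x ^ n) w)) - x (y ((x ^ n) w)) := by
      rw [Ring.lie_def]; simp [LinearMap.sub_apply, Module.End.mul_apply]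
    have key : y ((x ^ (n + 1)) w) - χ y • ((x ^ (n + 1)) w)
        = x (y ((x ^ n) w) - χ y • (x ^ n) w)
          + (⁅y, x⁆ ((x ^ n) w) - χ ⁅y, x⁆ • ((x ^ n) w))
          + χ ⁅y, x⁆ • ((x ^ n) w) := by
      rw [hp, hb, map_sub x, map_smul x]
      abel
    rw [key]
    exact add_mem (add_mem (x_maps x w n (ih y hy))
        (Un_mono x w (Nat.le_succ n) (ih _ (hcl y hy))))
      (Submodule.smul_mem _ _ (pow_w_mem x w (Nat.lt_succ_self n)))

lemma exists_stab (x : Module.End ℂ V) (w : V) :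
    ∃ N, ∀ m, N ≤ m → Un x w N = Un x w m := by
  obtain ⟨N, hN⟩ := monotone_stabilizes_iff_noetherian.mpr inferInstance ⟨Un x w, Un_mono x w⟩
  exact ⟨N, hN⟩

lemma chi_lie_eq_zero (x : Module.End ℂ V) (h : Set (Module.End ℂ V))
    (hcl : ∀ y ∈ h, ⁅y, x⁆ ∈ h) (χ : Module.End ℂ V → ℂ) (w : V) (hw : w ≠ 0)
    (heig : ∀ y ∈ h, y w = χ y • w) {y : Module.End ℂ V} (hy : y ∈ h) :
    χ ⁅y, x⁆ = 0 := by
  obtain ⟨N, hN⟩ := exists_stab x w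
  set U : Submodule ℂ V := Un x w N with hU
  have hUsucc : U = Un x w (N + 1) := hN (N + 1) (Nat.le_succ N)
  have hwU : w ∈ U := by
    rw [hUsucc]
    simpa using pow_w_mem x w (Nat.lt_succ_self 0 |>.trans_le (Nat.succ_le_succ (Nat.zero_le N)))
  have hxU : ∀ v ∈ U, x v ∈ U := by
    intro v hv
    rw [hUsucc]
    exact x_maps x w N hv
  have hsub : ∀ z ∈ h, ∀ n, ∀ v ∈ Un x w (n + 1), z v - χ z • v ∈ Un x w n := by
    intro z hz n v hv
    have hmap : Submodule.map (z - χ z • (1 : Module.End ℂ V)) (Un x w (n + 1)) ≤ Un x w n := by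
      rw [Un, Submodule.map_span, Submodule.span_le]
      rintro _ ⟨_, ⟨i, hi, rfl⟩, rfl⟩
      have h1 := claim1 x h hcl χ w heig i z hz
      have h2 : (z - χ z • (1 : Module.End ℂ V)) ((x ^ i) w)
          = z ((x ^ i) w) - χ z • ((x ^ i) w) := by
        simp [LinearMap.sub_apply]
      rw [h2]
      exact Un_mono x w (Nat.lt_succ_iff.mp hi) h1
    have := hmap ⟨v, hv, rfl⟩
    simpa using this
  have hzU : ∀ z ∈ h, ∀ v ∈ U, z v ∈ U := by
    intro z hz v hv
    have h1 : z v - χ z • v ∈ U := hsub z hz N v (hUsucc ▸ hv)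
    have : z v = (z v - χ z • v) + χ z • v := by abel
    rw [this]
    exact add_mem h1 (Submodule.smul_mem _ _ hv)
  have trace_eq : ∀ z, ∀ hz : z ∈ h,
      LinearMap.trace ℂ U (z.restrict (fun v hv => hzU z hz v hv))
        = (finrank ℂ U : ℂ) * χ z := by
    intro z hz
    set g : Module.End ℂ U := z.restrict (fun v hv => hzU z hz v hv) with hg
    set f : Module.End ℂ U := g - χ z • (1 : Module.End ℂ U) with hf
    have hnil : ∀ n, ∀ v : U, (v : V) ∈ Un x w n → (f ^ n) v = 0 := by
      intro n
      induction n with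
      | zero =>
        intro v hv
        rw [Un_zero] at hv
        have : v = 0 := by
          ext
          simpa using hv
        simp [this]
      | succ n ih =>
        intro v hv
        have h1 : ((f v : U) : V) ∈ Un x w n := by
          have : ((f v : U) : V) = z (v : V) - χ z • (v : V) := by
            simp [hf, hg, LinearMap.sub_apply, LinearMap.restrict_apply]
          rw [this]
          exact hsub z hz n (v : V) hv
        have h2 := ih (f v) h1
        rw [pow_succ]
        simpa [Module.End.mul_apply] using h2
    have hfn : f ^ N = 0 := by
      ext v
      exact congrArg Subtype.val (hnil N v v.2)
    have htr0 : LinearMap.trace ℂ U f = 0 :=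
      (LinearMap.isNilpotent_trace_of_isNilpotent ⟨N, hfn⟩).eq_zero
    have hgf : g = f + χ z • (1 : Module.End ℂ U) := by rw [hf]; abel
    rw [hgf, map_add, htr0, zero_add, map_smul]
    rw [LinearMap.trace_one]
    simp [mul_comm]
  -- the commutator
  have hzh := hcl y hy
  have hrestr : (⁅y, x⁆).restrict (fun v hv => hzU _ hzh v hv)
      = (y.restrict (fun v hv => hzU y hy v hv)) * (x.restrict hxU)
        - (x.restrict hxU) * (y.restrict (fun v hv => hzU y hy v hv)) := by
    ext v
    simp [Ring.lie_def, LinearMap.restrict_apply, Module.End.mul_apply, LinearMap.sub_apply]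
  have htr : LinearMap.trace ℂ U ((⁅y, x⁆).restrict (fun v hv => hzU _ hzh v hv)) = 0 := by
    rw [hrestr, map_sub, LinearMap.trace_mul_comm, sub_self]
  have hfin := trace_eq ⁅y, x⁆ hzh
  rw [htr] at hfin
  have hne : (finrank ℂ U : ℂ) ≠ 0 := by
    have h0 : 0 < finrank ℂ U := by
      refine Module.finrank_pos_iff.mpr ⟨⟨w, hwU⟩, 0, ?_⟩
      simp [Subtype.ext_iff, hw]
    exact_mod_cast h0.ne'
  exact ((mul_eq_zero.mp hfin.symm).resolve_left hne)

end Stmt13Aux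
section LieTheorem

attribute [local instance] LieRing.ofAssociativeRing

open Module LinearMap Stmt13Aux

variable {V : Type*} [AddCommGroup V] [Module ℂ V] [FiniteDimensional ℂ V]

lemma lie_derived_succ' {g : Type*} [LieRing g] [LieAlgebra ℂ g] (k : ℕ) :
    LieAlgebra.derivedSeries ℂ g (k + 1)
      = ⁅LieAlgebra.derivedSeries ℂ g k, LieAlgebra.derivedSeries ℂ g k⁆ := by
  rw [LieAlgebra.derivedSeries_def, LieAlgebra.derivedSeriesOfIdeal_succ,
    ← LieAlgebra.derivedSeries_def]

lemma lie_thm_aux [Nontrivial V] :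
    ∀ (n : ℕ) (g : LieSubalgebra ℂ (Module.End ℂ V)), LieAlgebra.IsSolvable g →
      finrank ℂ g = n →
      ∃ (χ : Module.End ℂ V → ℂ) (v : V), v ≠ 0 ∧ ∀ y ∈ g, y v = χ y • v := by
  intro n
  induction n using Nat.strong_induction_on with
  | _ n ih =>
  intro g hsolv hrank
  classical
  haveI : FiniteDimensional ℂ ↥g := inferInstanceAs (FiniteDimensional ℂ ↥g.toSubmodule)
  rcases Nat.eq_zero_or_pos n with h0 | hpos
  · obtain ⟨v, hv⟩ := exists_ne (0 : V)
    refine ⟨0, v, hv, fun y hy => ?_⟩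
    have hb : g.toSubmodule = ⊥ := by
      apply Submodule.finrank_eq_zero.mp
      rw [h0] at hrank
      exact hrank
    have : y = 0 := by
      have : y ∈ g.toSubmodule := hy
      rw [hb] at this
      simpa using this
    simp [this]
  · haveI hsolv' := hsolv
    haveI hgnt : Nontrivial ↥g := by
      apply (Module.finrank_pos_iff (R := ℂ) (M := ↥g)).mp
      rw [hrank]; exact hpos
    -- derived subalgebra is a proper ideal
    set Dg : LieIdeal ℂ ↥g := LieAlgebra.derivedSeries ℂ ↥g 1 with hDg
    have hDlt : Dg < ⊤ := LieAlgebra.derivedSeries_lt_top_of_solvable ℂ ↥g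
    have hWne : Dg.toSubmodule ≠ ⊤ := by
      intro hcon
      refine hDlt.ne ?_
      rw [← LieSubmodule.toSubmodule_inj, hcon, LieSubmodule.top_toSubmodule]
    -- find a codimension-one subspace containing the derived subalgebra
    haveI hQnt : Nontrivial (↥g ⧸ Dg.toSubmodule) :=
      Submodule.Quotient.nontrivial_iff.mpr hWne
    have hQpos : 0 < finrank ℂ (↥g ⧸ Dg.toSubmodule) := Module.finrank_pos
    let b := Module.finBasis ℂ (↥g ⧸ Dg.toSubmodule)
    let i0 : Fin (finrank ℂ (↥g ⧸ Dg.toSubmodule)) := ⟨0, hQpos⟩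
    let φ : ↥g →ₗ[ℂ] ℂ := (b.coord i0).comp Dg.toSubmodule.mkQ
    obtain ⟨x₀, hx₀⟩ := Submodule.mkQ_surjective Dg.toSubmodule (b i0)
    have hφx₀ : φ x₀ = 1 := by
      simp only [φ, LinearMap.comp_apply, hx₀]
      simp [Basis.coord_apply]
    set hsub : Submodule ℂ ↥g := LinearMap.ker φ with hhsub
    have hWh : Dg.toSubmodule ≤ hsub := by
      intro z hz
      have : Dg.toSubmodule.mkQ z = 0 := by
        rwa [Submodule.mkQ_apply, Submodule.Quotient.mk_eq_zero]
      simp [hhsub, LinearMap.mem_ker, φ, LinearMap.comp_apply, this]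
    have hx₀h : x₀ ∉ hsub := by
      intro hcon
      rw [hhsub, LinearMap.mem_ker, hφx₀] at hcon
      exact one_ne_zero hcon
    have hdecomp : ∀ z : ↥g, z - φ z • x₀ ∈ hsub := by
      intro z
      rw [hhsub, LinearMap.mem_ker, map_sub, map_smul, hφx₀, smul_eq_mul, mul_one, sub_self]
    have hlt : finrank ℂ ↥hsub < n := by
      rw [← hrank]
      exact Submodule.finrank_lt (fun hcon => hx₀h (hcon ▸ Submodule.mem_top))
    -- hsub is an ideal of g
    have hideal : ∀ z : ↥g, ∀ a : ↥g, a ∈ hsub → ⁅z, a⁆ ∈ hsub := by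
      intro z a _
      apply hWh
      have : ⁅z, a⁆ ∈ ⁅(⊤ : LieIdeal ℂ ↥g), (⊤ : LieIdeal ℂ ↥g)⁆ :=
        LieSubmodule.lie_mem_lie (LieSubmodule.mem_top z) (LieSubmodule.mem_top a)
      rw [hDg, lie_derived_succ']
      simpa using this
    -- the image of hsub in End V
    let hE : LieSubalgebra ℂ (Module.End ℂ V) :=
      { Submodule.map (g.toSubmodule.subtype) hsub with
        lie_mem' := by
          rintro x y ⟨(a : ↥g), ha, rfl⟩ ⟨(c : ↥g), hc, rfl⟩
          exact ⟨⁅a, c⁆, hideal a c hc, (LieSubalgebra.coe_bracket g a c)⟩ }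
    have hEmem : ∀ y, y ∈ hE ↔ ∃ a : ↥g, a ∈ hsub ∧ (a : Module.End ℂ V) = y := by
      intro y; rfl
    have hEle : hE ≤ g := by
      rintro y ⟨a, _, rfl⟩
      exact a.2
    haveI : LieAlgebra.IsSolvable ↥hE :=
      Function.Injective.lieAlgebra_isSolvable (f := LieSubalgebra.inclusion hEle)
        (LieSubalgebra.inclusion_injective hEle)
    have hErank : finrank ℂ ↥hE < n := by
      have : finrank ℂ ↥hE = finrank ℂ ↥hsub := by
        have := Submodule.finrank_map_subtype_eq g.toSubmodule hsub
        exact this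
      rw [this]; exact hlt
    obtain ⟨χ₀, w, hw, heig₀⟩ := ih (finrank ℂ ↥hE) hErank hE inferInstance rfl
    -- closure of hE under bracket with elements of g, and the key vanishing
    have hcl : ∀ z : ↥g, ∀ y ∈ hE, ⁅y, (z : Module.End ℂ V)⁆ ∈ hE := by
      rintro z y ⟨(a : ↥g), ha, rfl⟩
      refine ⟨⁅a, z⁆, ?_, LieSubalgebra.coe_bracket g a z⟩
      have h1 : ⁅z, a⁆ ∈ hsub := hideal z a ha
      have h2 : ⁅a, z⁆ = -⁅z, a⁆ := (lie_skew a z).symm ▸ rfl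
      rw [← lie_skew]
      exact neg_mem h1
    have hkey : ∀ z : ↥g, ∀ y ∈ hE, χ₀ ⁅y, (z : Module.End ℂ V)⁆ = 0 := by
      intro z y hy
      exact chi_lie_eq_zero (z : Module.End ℂ V) {y | y ∈ hE} (hcl z) χ₀ w hw heig₀ hy
    -- the common eigenspace of hE
    set W : Submodule ℂ V :=
      ⨅ y : ↥hE, LinearMap.ker ((y : Module.End ℂ V) - χ₀ ↑y • (1 : Module.End ℂ V)) with hW
    have hmemW : ∀ v, v ∈ W ↔ ∀ y ∈ hE, y v = χ₀ y • v := by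
      intro v
      rw [hW, Submodule.mem_iInf]
      constructor
      · intro h1 y hy
        have := h1 ⟨y, hy⟩
        rw [LinearMap.mem_ker, LinearMap.sub_apply, LinearMap.smul_apply,
          Module.End.one_apply, sub_eq_zero] at this
        exact this
      · intro h1 y
        rw [LinearMap.mem_ker, LinearMap.sub_apply, LinearMap.smul_apply,
          Module.End.one_apply, sub_eq_zero]
        exact h1 y y.2
    have hwW : w ∈ W := (hmemW w).mpr heig₀
    -- W is invariant under all of g
    have hinv : ∀ z : ↥g, ∀ v ∈ W, (z : Module.End ℂ V) v ∈ W := by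
      intro z v hv
      rw [hmemW]
      intro y hy
      have h1 : y ((z : Module.End ℂ V) v)
          = ⁅y, (z : Module.End ℂ V)⁆ v + (z : Module.End ℂ V) (y v) := by
        rw [Ring.lie_def]
        simp [LinearMap.sub_apply, Module.End.mul_apply]
      rw [h1, (hmemW v).mp hv _ (hcl z y hy), hkey z y hy, zero_smul, zero_add,
        (hmemW v).mp hv y hy, map_smul]
    -- an eigenvector of x₀ inside W
    haveI : Nontrivial ↥W := ⟨⟨w, hwW⟩, 0, by simp [Subtype.ext_iff, hw]⟩
    set e : Module.End ℂ ↥W := (x₀ : Module.End ℂ V).restrict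
      (fun v hv => hinv x₀ v hv) with he
    obtain ⟨μ, hμ⟩ := Module.End.exists_eigenvalue e
    obtain ⟨u, hu⟩ := hμ.exists_hasEigenvector
    have hu0 : (u : V) ≠ 0 := fun hcon => hu.right (by ext; simpa using hcon)
    have hx₀v : (x₀ : Module.End ℂ V) (u : V) = μ • (u : V) := by
      have h1 : e u = μ • u := hu.apply_eq_smul
      have := congrArg (Subtype.val) h1
      simpa [he, LinearMap.restrict_apply] using this
    -- assemble the eigenvalue function
    refine ⟨fun y => if hy : y ∈ g then
      χ₀ (((⟨y, hy⟩ - φ ⟨y, hy⟩ • x₀ : ↥g) : Module.End ℂ V)) + φ ⟨y, hy⟩ * μ else 0,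
      (u : V), hu0, ?_⟩
    intro y hy
    dsimp only
    rw [dif_pos hy]
    set z : ↥g := ⟨y, hy⟩ with hz
    set a : ↥g := z - φ z • x₀ with ha
    have haE : (a : Module.End ℂ V) ∈ hE := ⟨a, hdecomp z, rfl⟩
    have hydec : y = (a : Module.End ℂ V) + φ z • (x₀ : Module.End ℂ V) := by
      have hcoe : ((φ z • x₀ : ↥g) : Module.End ℂ V) = φ z • (x₀ : Module.End ℂ V) := rfl
      rw [ha]
      simp only [AddSubgroupClass.coe_sub, hcoe]
      abel
    rw [hydec]
    rw [LinearMap.add_apply, LinearMap.smul_apply]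
    rw [(hmemW (u : V)).mp u.2 _ haE, hx₀v]
    rw [add_smul, smul_smul]

end LieTheorem
section LieTheoremModule

attribute [local instance] LieRing.ofAssociativeRing

open Module LinearMap

lemma lie_thm {V : Type*} [AddCommGroup V] [Module ℂ V] [FiniteDimensional ℂ V]
    (g : Type*) [LieRing g] [LieAlgebra ℂ g] [LieAlgebra.IsSolvable g]
    [LieRingModule g V] [LieModule ℂ g V] [Nontrivial V] :
    ∃ (χ : g → ℂ) (v : V), v ≠ 0 ∧ ∀ x : g, ⁅x, v⁆ = χ x • v := by
  set ρ := LieModule.toEnd ℂ g V with hρ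
  haveI : LieAlgebra.IsSolvable ↥ρ.range := ρ.isSolvable_range
  obtain ⟨χ₀, v, hv, hχ⟩ := lie_thm_aux (V := V) (finrank ℂ ↥ρ.range) ρ.range inferInstance rfl
  refine ⟨fun x => χ₀ (ρ x), v, hv, fun x => ?_⟩
  have := hχ (ρ x) (ρ.mem_range_self x)
  rw [hρ] at this
  rw [LieModule.toEnd_apply_apply] at this
  exact this

end LieTheoremModule
section Main

open Module LinearMap LieAlgebra

lemma main_aux {L : Type*} [LieRing L] [LieAlgebra ℂ L]
    (hsolv : LieAlgebra.IsSolvable L)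
    (M : LieSubalgebra ℂ L) (hMne : M ≠ ⊤)
    (hfd : FiniteDimensional ℂ (L ⧸ M.toSubmodule))
    (hmax : ∀ N : LieSubalgebra ℂ L, M < N → N = ⊤) :
    ∀ x ∈ LieAlgebra.derivedSeries ℂ L 2, x ∈ M := by
  classical
  haveI := hsolv
  obtain ⟨nn, hnn⟩ := LieAlgebra.IsSolvable.solvable (R := ℂ) (L := L)
  have hex : ∃ j, ∀ y ∈ LieAlgebra.derivedSeries ℂ L j, y ∈ M := by
    refine ⟨nn, fun y hy => ?_⟩
    rw [hnn, LieSubmodule.mem_bot] at hy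
    rw [hy]; exact M.zero_mem
  have hP : ∀ y ∈ LieAlgebra.derivedSeries ℂ L (Nat.find hex), y ∈ M := Nat.find_spec hex
  have hj0ne : Nat.find hex ≠ 0 := by
    intro hcon
    apply hMne
    rw [eq_top_iff]
    intro y _
    refine hP y ?_
    rw [hcon, LieAlgebra.derivedSeries_def, LieAlgebra.derivedSeriesOfIdeal_zero]
    exact LieSubmodule.mem_top y
  obtain ⟨k, hk⟩ : ∃ k, Nat.find hex = k + 1 := Nat.exists_eq_succ_of_ne_zero hj0ne
  have hk1 : ∀ y ∈ LieAlgebra.derivedSeries ℂ L (k + 1), y ∈ M := hk ▸ hP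
  have hknot : ¬∀ y ∈ LieAlgebra.derivedSeries ℂ L k, y ∈ M :=
    Nat.find_min hex (by omega)
  push_neg at hknot
  obtain ⟨d, hdA, hdM⟩ := hknot
  set A := LieAlgebra.derivedSeries ℂ L k with hA
  -- M + A is a subalgebra, hence equals ⊤ by maximality
  set N : LieSubalgebra ℂ L :=
    { toSubmodule := M.toSubmodule ⊔ A.toSubmodule
      lie_mem' := by
        intro x y hx hy
        obtain ⟨m, hm, d₁, hd₁, rfl⟩ := Submodule.mem_sup.mp hx
        obtain ⟨m', hm', d₂, hd₂, rfl⟩ := Submodule.mem_sup.mp hy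
        have e1 : ⁅m + d₁, m' + d₂⁆
            = ⁅m, m'⁆ + (⁅m, d₂⁆ + (⁅d₁, m'⁆ + ⁅d₁, d₂⁆)) := by
          rw [lie_add, add_lie, add_lie]; abel
        show ⁅m + d₁, m' + d₂⁆ ∈ M.toSubmodule ⊔ A.toSubmodule
        rw [e1]
        refine add_mem (Submodule.mem_sup_left (M.lie_mem hm hm')) ?_
        refine add_mem (Submodule.mem_sup_right (A.lie_mem hd₂)) ?_
        refine add_mem (Submodule.mem_sup_right ?_) (Submodule.mem_sup_right (A.lie_mem hd₂))
        rw [← lie_skew]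
        exact neg_mem (A.lie_mem hd₁) } with hN
  have hMN : M ≤ N := fun y hy => Submodule.mem_sup_left hy
  have hNtop : N = ⊤ := by
    refine hmax N (lt_of_le_of_ne hMN ?_)
    intro hcon
    apply hdM
    have : d ∈ N := Submodule.mem_sup_right hdA
    rw [← hcon] at this
    exact this
  have hsuptop : M.toSubmodule ⊔ A.toSubmodule = ⊤ := by
    have h1 := congrArg LieSubalgebra.toSubmodule hNtop
    rwa [LieSubalgebra.top_toSubmodule] at h1
  -- the ideal J
  set Jsub : Submodule ℂ L :=
    (LieAlgebra.derivedSeries ℂ L (k + 1)).toSubmodule ⊓ ⊤ ⊔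
      (A.toSubmodule ⊓ M.toSubmodule) with hJsub
  have hJsub' : Jsub = (LieAlgebra.derivedSeries ℂ L (k + 1)).toSubmodule ⊔
      (A.toSubmodule ⊓ M.toSubmodule) := by rw [hJsub, inf_top_eq]
  have hJM : Jsub ≤ M.toSubmodule := by
    rw [hJsub']
    exact sup_le (fun y hy => hk1 y hy) inf_le_right
  set J : LieIdeal ℂ L :=
    { toSubmodule := Jsub
      lie_mem := by
        intro x m hm
        rw [hJsub'] at hm ⊢
        obtain ⟨a, ha, b, hb, rfl⟩ := Submodule.mem_sup.mp hm
        obtain ⟨hb1, hb2⟩ := Submodule.mem_inf.mp hb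
        rw [lie_add]
        refine add_mem (Submodule.mem_sup_left
          ((LieAlgebra.derivedSeries ℂ L (k + 1)).lie_mem ha)) ?_
        have hxtop : x ∈ M.toSubmodule ⊔ A.toSubmodule := by
          rw [hsuptop]; exact Submodule.mem_top
        obtain ⟨m₀, hm₀, dd, hdd, rfl⟩ := Submodule.mem_sup.mp hxtop
        rw [add_lie]
        refine add_mem (Submodule.mem_sup_right
          (Submodule.mem_inf.mpr ⟨A.lie_mem hb1, M.lie_mem hm₀ hb2⟩)) ?_
        refine Submodule.mem_sup_left ?_
        have hsucc : LieAlgebra.derivedSeries ℂ L (k + 1) = ⁅A, A⁆ := lie_derived_succ' k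
        rw [hsucc]
        exact LieSubmodule.lie_mem_lie hdd hb1 } with hJ
  -- quotient
  set π : L →ₗ⁅ℂ⁆ (L ⧸ J) :=
    { J.toSubmodule.mkQ with
      map_lie' := by
        intro x y
        exact LieSubmodule.Quotient.mk_bracket J x y } with hπ
  have hπs : Function.Surjective π := fun q => Quotient.inductionOn' q fun u => ⟨u, rfl⟩
  have hker : ∀ z : L, (π : L →ₗ[ℂ] L ⧸ J) z = 0 ↔ z ∈ Jsub := by
    intro z
    exact LieSubmodule.Quotient.mk_eq_zero' (N := J)
  haveI : LieAlgebra.IsSolvable (L ⧸ J) := hπs.lieAlgebra_isSolvable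
  -- images of M and A
  set Mq : LieSubalgebra ℂ (L ⧸ J) :=
    { toSubmodule := Submodule.map (π : L →ₗ[ℂ] L ⧸ J) M.toSubmodule
      lie_mem' := by
        rintro x y ⟨m, hm, rfl⟩ ⟨m', hm', rfl⟩
        exact ⟨⁅m, m'⁆, M.lie_mem hm hm', π.map_lie m m'⟩ } with hMq
  set Aq : LieIdeal ℂ (L ⧸ J) :=
    { toSubmodule := Submodule.map (π : L →ₗ[ℂ] L ⧸ J) A.toSubmodule
      lie_mem := by
        intro x m hm
        obtain ⟨dd, hdd, rfl⟩ := hm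
        obtain ⟨z, rfl⟩ := hπs x
        exact ⟨⁅z, dd⁆, A.lie_mem hdd, π.map_lie z dd⟩ } with hAq
  have hdisj : ∀ q : L ⧸ J, q ∈ Mq.toSubmodule → q ∈ Aq.toSubmodule → q = 0 := by
    rintro q ⟨m, hm, rfl⟩ ⟨dd, hdd, heq⟩
    have h1 : (π : L →ₗ[ℂ] L ⧸ J) (dd - m) = 0 := by
      rw [map_sub, heq]; exact sub_self _
    have h2 : dd - m ∈ M.toSubmodule := hJM ((hker _).mp h1)
    have h3 : dd ∈ A.toSubmodule ⊓ M.toSubmodule := by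
      refine Submodule.mem_inf.mpr ⟨hdd, ?_⟩
      have : dd = (dd - m) + m := by abel
      rw [this]
      exact M.add_mem h2 hm
    have h4 : dd ∈ Jsub := by rw [hJsub']; exact Submodule.mem_sup_right h3
    rw [← heq]
    exact (hker dd).mpr h4
  have hcodis : Mq.toSubmodule ⊔ Aq.toSubmodule = ⊤ := by
    show Submodule.map (π : L →ₗ[ℂ] L ⧸ J) M.toSubmodule ⊔
      Submodule.map (π : L →ₗ[ℂ] L ⧸ J) A.toSubmodule = ⊤
    rw [← Submodule.map_sup, hsuptop, Submodule.map_top, LinearMap.range_eq_top]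
    exact hπs
  have hdMq : π d ∉ Mq.toSubmodule := by
    rintro ⟨m, hm, heq⟩
    apply hdM
    have h1 : (π : L →ₗ[ℂ] L ⧸ J) (d - m) = 0 := by
      rw [map_sub, heq]; exact sub_self _
    have h2 : d - m ∈ M.toSubmodule := hJM ((hker _).mp h1)
    have : d = (d - m) + m := by abel
    rw [this]
    exact M.add_mem h2 hm
  have hAqne : Aq.toSubmodule ≠ ⊥ := by
    intro hcon
    apply hdMq
    have h1 : Mq.toSubmodule = ⊤ := by rw [← hcodis, hcon, sup_bot_eq]
    have : π d ∈ (⊤ : Submodule ℂ (L ⧸ J)) := Submodule.mem_top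
    rwa [← h1] at this
  -- transfer of maximality
  have htrans : ∀ NN : LieSubalgebra ℂ (L ⧸ J), Mq.toSubmodule ≤ NN.toSubmodule →
      (∃ q, q ∈ NN ∧ q ∉ Mq.toSubmodule) → ∀ z : L ⧸ J, z ∈ NN := by
    rintro NN hle ⟨q, hqN, hqM⟩ z
    set NC : LieSubalgebra ℂ L :=
      { toSubmodule := Submodule.comap (π : L →ₗ[ℂ] L ⧸ J) NN.toSubmodule
        lie_mem' := by
          intro x y hx hy
          show (π : L →ₗ[ℂ] L ⧸ J) ⁅x, y⁆ ∈ NN.toSubmodule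
          have : (π : L →ₗ[ℂ] L ⧸ J) ⁅x, y⁆ = ⁅π x, π y⁆ := π.map_lie x y
          rw [this]
          exact NN.lie_mem hx hy } with hNC
    have hMNC : M ≤ NC := fun m hm => hle ⟨m, hm, rfl⟩
    have hNCtop : NC = ⊤ := by
      refine hmax NC (lt_of_le_of_ne hMNC ?_)
      intro hcon
      obtain ⟨u, rfl⟩ := hπs q
      have hu : u ∈ NC := hqN
      rw [← hcon] at hu
      exact hqM ⟨u, hu, rfl⟩
    obtain ⟨u, rfl⟩ := hπs z
    have : u ∈ NC := by rw [hNCtop]; exact LieSubalgebra.mem_top u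
    exact this
  -- Aq is finite dimensional
  have hdisj' : Disjoint Mq.toSubmodule Aq.toSubmodule := by
    rw [disjoint_iff]
    refine (Submodule.eq_bot_iff _).mpr fun q hq => ?_
    obtain ⟨h1, h2⟩ := Submodule.mem_inf.mp hq
    exact hdisj q h1 h2
  have hcompl : IsCompl Mq.toSubmodule Aq.toSubmodule := ⟨hdisj', codisjoint_iff.mpr hcodis⟩
  have hmapQle : M.toSubmodule ≤ Submodule.comap (π : L →ₗ[ℂ] L ⧸ J) Mq.toSubmodule :=
    fun m hm => ⟨m, hm, rfl⟩
  have hfsurj : Function.Surjective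
      (Submodule.mapQ M.toSubmodule Mq.toSubmodule (π : L →ₗ[ℂ] L ⧸ J) hmapQle) := by
    intro c
    obtain ⟨q, rfl⟩ := Submodule.Quotient.mk_surjective Mq.toSubmodule c
    obtain ⟨u, rfl⟩ := hπs q
    exact ⟨Submodule.Quotient.mk u, by rw [Submodule.mapQ_apply]; rfl⟩
  haveI hfdq : FiniteDimensional ℂ ((L ⧸ J) ⧸ Mq.toSubmodule) :=
    Module.Finite.of_surjective _ hfsurj
  haveI hfinA : FiniteDimensional ℂ ↥(Aq.toSubmodule) :=
    Module.Finite.equiv (Submodule.quotientEquivOfIsCompl _ _ hcompl)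
  haveI hfinA' : FiniteDimensional ℂ ↥Aq := hfinA
  haveI hntA : Nontrivial ↥Aq := by
    refine (LieSubmodule.nontrivial_iff_ne_bot ℂ (L ⧸ J) (L ⧸ J)).mpr fun hcon => hAqne ?_
    rw [hcon]
    exact LieSubmodule.bot_toSubmodule
  -- Lie's theorem gives a common eigenvector in Aq
  obtain ⟨χ, v, hv0, hχ⟩ := lie_thm (V := ↥Aq) (L ⧸ J)
  set vL : L ⧸ J := (v : L ⧸ J) with hvL
  have hvmem : vL ∈ Aq.toSubmodule := v.2
  have hv0' : vL ≠ 0 := fun hcon => hv0 (Subtype.ext hcon)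
  have hbr : ∀ x : L ⧸ J, ⁅x, vL⁆ = χ x • vL := by
    intro x
    have h1 := congrArg Subtype.val (hχ x)
    rwa [LieSubmodule.coe_bracket, SetLike.val_smul] at h1
  have hscal : ∀ c : ℂ, c • vL = 0 → c = 0 := by
    intro c hc
    rcases smul_eq_zero.mp hc with h | h
    · exact h
    · exact absurd h hv0'
  -- the derived algebra of the quotient kills vL
  set φv : (L ⧸ J) →ₗ[ℂ] (L ⧸ J) :=
    { toFun := fun z => ⁅z, vL⁆
      map_add' := fun a b => add_lie a b vL
      map_smul' := fun c a => smul_lie c a vL } with hφv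
  have hD1ker : (LieAlgebra.derivedSeries ℂ (L ⧸ J) 1).toSubmodule ≤ LinearMap.ker φv := by
    rw [lie_derived_succ' 0, LieSubmodule.lieIdeal_oper_eq_linear_span', Submodule.span_le]
    rintro _ ⟨x, _, y, _, rfl⟩
    simp only [SetLike.mem_coe, LinearMap.mem_ker]
    show ⁅⁅x, y⁆, vL⁆ = 0
    rw [lie_lie, hbr y, hbr x, lie_smul, lie_smul, hbr x, hbr y, smul_comm, sub_self]
  have hχ0 : ∀ z ∈ (LieAlgebra.derivedSeries ℂ (L ⧸ J) 1).toSubmodule, ⁅z, vL⁆ = 0 := by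
    intro z hz
    exact hD1ker hz
  -- every element of Aq is a multiple of vL
  have hAv : ∀ a ∈ Aq.toSubmodule, ∃ c : ℂ, a = c • vL := by
    set NN : LieSubalgebra ℂ (L ⧸ J) :=
      { toSubmodule := Mq.toSubmodule ⊔ Submodule.span ℂ {vL}
        lie_mem' := by
          intro x y hx hy
          obtain ⟨m, hm, s, hs, rfl⟩ := Submodule.mem_sup.mp hx
          obtain ⟨m', hm', s', hs', rfl⟩ := Submodule.mem_sup.mp hy
          obtain ⟨c, rfl⟩ := Submodule.mem_span_singleton.mp hs
          obtain ⟨c', rfl⟩ := Submodule.mem_span_singleton.mp hs'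
          have e1 : ⁅m + c • vL, m' + c' • vL⁆
              = ⁅m, m'⁆ + (c • ⁅vL, m'⁆ + (c' • ⁅m, vL⁆ + (c' * c) • ⁅vL, vL⁆)) := by
            simp only [lie_add, add_lie, lie_smul, smul_lie, smul_add, smul_smul]
            abel
          show ⁅m + c • vL, m' + c' • vL⁆ ∈ Mq.toSubmodule ⊔ Submodule.span ℂ {vL}
          rw [e1]
          have hspan : ∀ t : ℂ, t • vL ∈ Submodule.span ℂ {vL} := fun t =>
            Submodule.smul_mem _ _ (Submodule.mem_span_singleton_self vL)
          refine add_mem (Submodule.mem_sup_left (Mq.lie_mem hm hm'))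
            (add_mem (Submodule.mem_sup_right ?_)
              (add_mem (Submodule.mem_sup_right ?_) (Submodule.mem_sup_right ?_)))
          · have hvm : ⁅vL, m'⁆ = -(χ m' • vL) := by rw [← lie_skew, hbr m']
            rw [hvm, smul_neg, smul_smul]
            exact neg_mem (hspan _)
          · rw [hbr m, smul_smul]
            exact hspan _
          · rw [lie_self, smul_zero]
            exact Submodule.zero_mem _ } with hNN
    have hvNN : vL ∈ NN := Submodule.mem_sup_right (Submodule.mem_span_singleton_self vL)
    have hvnM : vL ∉ Mq.toSubmodule := fun hc => hv0' (hdisj vL hc hvmem)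
    have hall := htrans NN le_sup_left ⟨vL, hvNN, hvnM⟩
    intro a ha
    have haNN : a ∈ Mq.toSubmodule ⊔ Submodule.span ℂ {vL} := hall a
    obtain ⟨m, hm, s, hs, rfl⟩ := Submodule.mem_sup.mp haNN
    obtain ⟨c, rfl⟩ := Submodule.mem_span_singleton.mp hs
    have hmA : m ∈ Aq.toSubmodule := by
      have h1 : m = (m + c • vL) - c • vL := by abel
      rw [h1]
      exact Submodule.sub_mem _ ha (Submodule.smul_mem _ _ hvmem)
    have : m = 0 := hdisj m hm hmA
    exact ⟨c, by rw [this, zero_add]⟩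
  -- second derived series of the quotient is inside Mq
  have hD2q : (LieAlgebra.derivedSeries ℂ (L ⧸ J) 2).toSubmodule ≤ Mq.toSubmodule := by
    rw [lie_derived_succ' 1, LieSubmodule.lieIdeal_oper_eq_linear_span', Submodule.span_le]
    rintro _ ⟨z, hz, ww, hww, rfl⟩
    have hztop : z ∈ Mq.toSubmodule ⊔ Aq.toSubmodule := by rw [hcodis]; exact Submodule.mem_top
    have hwtop : ww ∈ Mq.toSubmodule ⊔ Aq.toSubmodule := by rw [hcodis]; exact Submodule.mem_top
    obtain ⟨m, hm, a, ha, rfl⟩ := Submodule.mem_sup.mp hztop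
    obtain ⟨m', hm', a', ha', rfl⟩ := Submodule.mem_sup.mp hwtop
    obtain ⟨c, rfl⟩ := hAv a ha
    obtain ⟨c', rfl⟩ := hAv a' ha'
    have h1 : ⁅(m' + c' • vL : L ⧸ J), vL⁆ = 0 := hχ0 _ hww
    have h2 : χ m' • vL = 0 := by
      rw [add_lie, smul_lie, lie_self, smul_zero, add_zero, hbr m'] at h1
      exact h1
    have hχm' : χ m' = 0 := hscal _ h2
    have h3 : ⁅(m + c • vL : L ⧸ J), vL⁆ = 0 := hχ0 _ hz
    have h4 : ⁅m', vL⁆ = 0 := by rw [hbr m', hχm', zero_smul]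
    have h5 : ⁅vL, m'⁆ = 0 := by rw [← lie_skew, h4, neg_zero]
    show ⁅m + c • vL, m' + c' • vL⁆ ∈ Mq.toSubmodule
    rw [lie_add, lie_smul, h3, smul_zero, add_zero, add_lie, smul_lie, h5, smul_zero, add_zero]
    exact Mq.lie_mem hm hm'
  -- conclude
  intro x hx
  have hmap : π x ∈ LieAlgebra.derivedSeries ℂ (L ⧸ J) 2 := by
    have h1 : π x ∈ (LieAlgebra.derivedSeries ℂ L 2).map π := LieIdeal.mem_map hx
    rwa [LieIdeal.derivedSeries_map_eq 2 hπs] at h1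
  have h2 : π x ∈ Mq.toSubmodule := hD2q hmap
  have h2' : (π : L →ₗ[ℂ] L ⧸ J) x ∈ Mq.toSubmodule := h2
  have heq2 : ∃ m, m ∈ M.toSubmodule ∧ (π : L →ₗ[ℂ] L ⧸ J) m = (π : L →ₗ[ℂ] L ⧸ J) x :=
    Submodule.mem_map.mp h2'
  obtain ⟨m', hm', heq'⟩ := heq2
  have h3 : (π : L →ₗ[ℂ] L ⧸ J) (x - m') = 0 := by
    rw [map_sub, heq', sub_self]
  have h4 : x - m' ∈ M.toSubmodule := hJM ((hker _).mp h3)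
  have h5 : x = (x - m') + m' := by abel
  rw [h5]
  exact M.add_mem h4 hm'

end Main
/-- A solvable complex Banach Lie algebra in which the maximal proper closed Lie
subalgebras of finite codimension intersect to {0} satisfies ⁅⁅L,L⁆,⁅L,L⁆⁆ = {0}. -/
theorem stmt_13 {L : Type*} [LieRing L] [LieAlgebra ℂ L] [MetricSpace L] [CompleteSpace L]
    (hdist : ∀ x y z : L, dist (x + z) (y + z) = dist x y)
    (hnorm : ∀ (c : ℂ) (x : L), dist (c • x) 0 = ‖c‖ * dist x 0)
    (hbracket : Continuous fun p : L × L => ⁅p.1, p.2⁆)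
    (hfree : sInf {M : LieSubalgebra ℂ L | M ≠ ⊤ ∧ IsClosed (M : Set L) ∧
      FiniteDimensional ℂ (L ⧸ M.toSubmodule) ∧
      ∀ N : LieSubalgebra ℂ L, M < N → N = ⊤} = ⊥)
    (hsolv : LieAlgebra.IsSolvable L) :
    LieAlgebra.derivedSeries ℂ L 2 = ⊥ := by
  refine (LieSubmodule.eq_bot_iff _).mpr fun m hm => ?_
  set S : Set (LieSubalgebra ℂ L) := {M : LieSubalgebra ℂ L | M ≠ ⊤ ∧ IsClosed (M : Set L) ∧
      FiniteDimensional ℂ (L ⧸ M.toSubmodule) ∧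
      ∀ N : LieSubalgebra ℂ L, M < N → N = ⊤} with hS
  rw [hS] at hfree
  have hmem : m ∈ ((sInf S : LieSubalgebra ℂ L) : Set L) := by
    rw [LieSubalgebra.coe_sInf]
    simp only [Set.mem_iInter]
    intro K hK
    obtain ⟨hK1, _, hK3, hK4⟩ := hK
    exact main_aux hsolv K hK1 hK3 hK4 m hm
  rw [hfree] at hmem
  exact (LieSubalgebra.mem_bot m).mp hmem
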